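/- For every position p of w, there exist N ∈ ℕ and words a₀, a₁, …, a_{N−1}, each of which belongs to {ε, [0], [4]} (the empty word, the single letter 0, or the single letter 4), such that σ(p) = ∑_{i=0}^{N−1} M^i · ψ(a_i). -/

import Mathlib

/-- The morphism φ on letters: φ(0)=03, φ(1)=43, φ(3)=1, φ(4)=01. -/
def phiLetter : ℕ → List ℕ
  | 0 => [0, 3]
  | 1 => [4, 3]
  | 3 => [1]
  | 4 => [0, 1]
  | _ => []

/-- The morphism φ on words, applied letterwise and concatenated. -/
def phi (x : List ℕ) : List ℕ := x.flatMap phiLetter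

/-- The fixed point `w` of φ beginning with 0: `w n` is the `n`-th letter of
`φ^k([0])` for any `k` with `|φ^k([0])| > n` (e.g. `k = n+1`). -/
def w (n : ℕ) : ℕ := (phi^[n + 1] [0]).getD n 0

/-- The factor `w[p, q) = (w p, …, w (q-1))`. -/
def factorW (p q : ℕ) : List ℕ := (List.range' p (q - p)).map w

/-- The Parikh map ψ, sending a word over `{0,1,3,4}` to `(|x|₀,|x|₁,|x|₃,|x|₄) ∈ ℤ⁴`. -/
def psi (x : List ℕ) : Fin 4 → ℤ :=
  ![(x.count 0 : ℤ), (x.count 1 : ℤ), (x.count 3 : ℤ), (x.count 4 : ℤ)]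

/-- The incidence matrix of φ. -/
def M : Matrix (Fin 4) (Fin 4) ℤ :=
  !![1, 0, 0, 1; 0, 0, 1, 1; 1, 1, 0, 0; 0, 1, 0, 0]

/-- `η(p) = |φ(w[0,p))|`. -/
def eta (p : ℕ) : ℕ := (phi ((List.range p).map w)).length

/-- `σ(p) = ψ(w[0,p))`, the Parikh vector of the prefix of `w` of length `p`. -/
def sigmaW (p : ℕ) : Fin 4 → ℤ := psi ((List.range p).map w)

/-- The parent of a position `x`: the unique `t` with `η(t) ≤ x < η(t+1)`. -/
def par (x : ℕ) : ℕ := Nat.findGreatest (fun t => eta t ≤ x) x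

-- basic phi lemmas
lemma phi_append (x y : List ℕ) : phi (x ++ y) = phi x ++ phi y := by
  simp [phi]

lemma phi_mono {u v : List ℕ} (h : u <+: v) : phi u <+: phi v := by
  obtain ⟨t, rfl⟩ := h
  exact ⟨phi t, (phi_append u t).symm⟩

lemma iter_succ (k : ℕ) : phi^[k+1] [0] = phi (phi^[k] [0]) :=
  Function.iterate_succ_apply' phi k [0]

lemma zero_prefix (k : ℕ) : [0] <+: phi^[k] [0] := by
  induction k with
  | zero => exact List.prefix_refl _
  | succ k ih =>
    obtain ⟨t, ht⟩ := ih
    rw [iter_succ, ← ht, phi_append]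
    exact ⟨3 :: phi t, by simp [phi, phiLetter]⟩

lemma step_prefix (k : ℕ) : phi^[k] [0] <+: phi^[k+1] [0] := by
  induction k with
  | zero => exact ⟨[3], rfl⟩
  | succ k ih =>
    rw [iter_succ, iter_succ]
    exact phi_mono ih

lemma chain_prefix {k m : ℕ} (h : k ≤ m) : phi^[k] [0] <+: phi^[m] [0] := by
  induction m with
  | zero => simp [Nat.le_zero.mp h]
  | succ m ih =>
    rcases Nat.lt_or_ge k (m+1) with h' | h'
    · exact (ih (Nat.lt_succ_iff.mp h')).trans (step_prefix m)
    · have : k = m+1 := le_antisymm h h'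
      subst this; exact List.prefix_refl _

lemma inSigma (k : ℕ) : ∀ c ∈ phi^[k] [0], c = 0 ∨ c = 1 ∨ c = 3 ∨ c = 4 := by
  induction k with
  | zero => intro c hc; simp at hc; tauto
  | succ k ih =>
    rw [iter_succ]
    intro c hc
    simp only [phi, List.mem_flatMap] at hc
    obtain ⟨d, hd, hcd⟩ := hc
    rcases ih d hd with rfl | rfl | rfl | rfl <;> simp [phiLetter] at hcd <;> tauto

lemma len_phi_ge {x : List ℕ} (h : ∀ c ∈ x, c = 0 ∨ c = 1 ∨ c = 3 ∨ c = 4) :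
    x.length ≤ (phi x).length := by
  induction x with
  | nil => simp
  | cons c x ih =>
    have h1 : 1 ≤ (phiLetter c).length := by
      rcases h c (List.mem_cons_self ..) with rfl | rfl | rfl | rfl <;> simp [phiLetter]
    have h2 := ih (fun d hd => h d (List.mem_cons_of_mem _ hd))
    simp only [phi, List.flatMap_cons, List.length_append, List.length_cons] at h2 ⊢
    omega

lemma len_ge (k : ℕ) : k + 1 ≤ (phi^[k] [0]).length := by
  induction k with
  | zero => simp
  | succ k ih =>
    obtain ⟨t, ht⟩ := zero_prefix k
    have hS : ∀ c ∈ t, c = 0 ∨ c = 1 ∨ c = 3 ∨ c = 4 :=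
      fun c hc => inSigma k c (by rw [← ht]; simp [hc])
    have h2 := len_phi_ge hS
    have h3 : (phi^[k+1] [0]).length = 2 + (phi t).length := by
      rw [iter_succ, ← ht, phi_append]
      simp [phi, phiLetter]; omega
    have h4 : (phi^[k] [0]).length = 1 + t.length := by rw [← ht]; simp; omega
    omega

lemma getD_of_prefix {u v : List ℕ} (h : u <+: v) {n : ℕ} (hn : n < u.length) :
    v.getD n 0 = u.getD n 0 := by
  obtain ⟨t, rfl⟩ := h
  rw [List.getD_eq_getElem _ _ hn, List.getD_eq_getElem _ _ (by simp; omega)]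
  exact List.getElem_append_left (bs := t) hn

lemma w_eq {k n : ℕ} (hn : n < (phi^[k] [0]).length) :
    (phi^[k] [0]).getD n 0 = w n := by
  unfold w
  rcases Nat.le_total k (n+1) with h | h
  · exact (getD_of_prefix (chain_prefix h) hn).symm
  · exact getD_of_prefix (chain_prefix h) (by have := len_ge (n+1); omega)

lemma w_mem_Sigma (n : ℕ) : w n = 0 ∨ w n = 1 ∨ w n = 3 ∨ w n = 4 := by
  have hl : n < (phi^[n+1] [0]).length := by have := len_ge (n+1); omega
  have : w n = (phi^[n+1] [0]).getD n 0 := rfl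
  rw [this, List.getD_eq_getElem _ _ hl]
  exact inSigma (n+1) _ (List.getElem_mem hl)

lemma range_map_w_eq_take {k m : ℕ} (hm : m ≤ (phi^[k] [0]).length) :
    (List.range m).map w = (phi^[k] [0]).take m := by
  apply List.ext_getElem
  · simp; omega
  · intro i h1 h2
    simp only [List.getElem_map, List.getElem_range, List.getElem_take]
    simp at h1
    rw [← w_eq (k := k) (by omega), List.getD_eq_getElem _ _ (by omega)]

lemma eta_succ (t : ℕ) : eta (t+1) = eta t + (phiLetter (w t)).length := by
  unfold eta
  rw [List.range_succ, List.map_append, phi_append]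
  simp [phi]

lemma w_zero : w 0 = 0 := rfl

lemma eta_lb (t : ℕ) : 1 ≤ t → t + 1 ≤ eta t := by
  induction t with
  | zero => omega
  | succ t ih =>
    intro _
    rcases Nat.eq_zero_or_pos t with rfl | ht
    · show 2 ≤ eta 1
      have : eta 1 = 2 := by simp [eta, List.range_succ, w_zero, phi, phiLetter]
      omega
    · have h1 : 1 ≤ (phiLetter (w t)).length := by
        rcases w_mem_Sigma t with h | h | h | h <;> simp [h, phiLetter]
      have := ih ht
      rw [eta_succ]; omega

lemma prefix_eq (t : ℕ) :
    (List.range (eta t)).map w = phi ((List.range t).map w) := by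
  have h1 : t ≤ (phi^[t] [0]).length := by have := len_ge t; omega
  have h2 : (List.range t).map w = (phi^[t] [0]).take t := range_map_w_eq_take h1
  have hsplit : phi^[t+1] [0] = phi ((phi^[t] [0]).take t) ++ phi ((phi^[t] [0]).drop t) := by
    rw [iter_succ, ← phi_append, List.take_append_drop]
  have hlen : eta t ≤ (phi^[t+1] [0]).length := by
    rw [hsplit]; simp only [List.length_append]
    have : eta t = (phi ((phi^[t] [0]).take t)).length := by rw [eta, h2]
    omega
  rw [range_map_w_eq_take hlen, h2, hsplit]
  rw [List.take_append]
  have heq : eta t = (phi ((phi^[t] [0]).take t)).length := by rw [eta, h2]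
  rw [heq, List.take_length, Nat.sub_self, List.take_zero, List.append_nil]

theorem test : True := trivial

lemma psi_append (x y : List ℕ) : psi (x ++ y) = psi x + psi y := by
  funext i
  fin_cases i <;> simp [psi, List.count_append]

lemma psi_nil : psi [] = 0 := by
  funext i; fin_cases i <;> simp [psi]

lemma psi_phiLetter (c : ℕ) : psi (phiLetter c) = M.mulVec (psi [c]) := by
  funext i
  match c with
  | 0 | 1 | 2 | 3 | 4 =>
    fin_cases i <;>
      simp [psi, phiLetter, M, Matrix.mulVec, dotProduct, Fin.sum_univ_four,
        List.count_cons, List.count_nil]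
  | (n+5) =>
    fin_cases i <;>
      simp [psi, phiLetter, M, Matrix.mulVec, dotProduct, Fin.sum_univ_four,
        List.count_cons, List.count_nil]

lemma psi_phi (x : List ℕ) : psi (phi x) = M.mulVec (psi x) := by
  induction x with
  | nil => simp [phi, psi_nil, Matrix.mulVec_zero]
  | cons c x ih =>
    have h1 : phi (c :: x) = phiLetter c ++ phi x := by simp [phi]
    have h2 : (c :: x) = [c] ++ x := rfl
    rw [h1, psi_append, ih, psi_phiLetter, h2, psi_append, Matrix.mulVec_add]

lemma eta_zero : eta 0 = 0 := by simp [eta, phi]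

lemma par_le (p : ℕ) : eta (par p) ≤ p := by
  exact Nat.findGreatest_spec (P := fun t => eta t ≤ p) (Nat.zero_le p) (by simp [eta_zero])

lemma par_lt (p : ℕ) : p < eta (par p + 1) := by
  by_contra h
  push_neg at h
  have hle : par p + 1 ≤ p := le_trans (by have := eta_lb (par p + 1) (by omega); omega) h
  have := Nat.findGreatest_is_greatest (P := fun t => eta t ≤ p)
      (Nat.lt_succ_self (par p)) hle
  exact this h

lemma par_lt_self {p : ℕ} (hp : 1 ≤ p) : par p < p := by
  have h1 := par_le p
  by_contra h
  push_neg at h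
  have hle : par p ≤ p := Nat.findGreatest_le p
  have hpp : par p = p := le_antisymm hle h
  rw [hpp] at h1
  have := eta_lb p hp
  omega

lemma decomp (p : ℕ) (hp : 1 ≤ p) :
    (List.range p).map w
      = phi ((List.range (par p)).map w) ++ (phiLetter (w (par p))).take (p - eta (par p)) := by
  set t := par p with htdef
  have h1 : eta t ≤ p := par_le p
  have h2 : p < eta (t+1) := par_lt p
  have key : (List.range (eta (t+1))).map w
      = phi ((List.range t).map w) ++ phiLetter (w t) := by
    rw [prefix_eq, List.range_succ, List.map_append, phi_append]
    simp [phi]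
  have hsub : (List.range p).map w = ((List.range (eta (t+1))).map w).take p := by
    rw [← List.map_take, List.take_range, min_eq_left (le_of_lt h2)]
  have hlen : (phi ((List.range t).map w)).length = eta t := rfl
  rw [hsub, key, List.take_append, hlen,
    List.take_of_length_le h1]

lemma sigma_step (p : ℕ) (hp : 1 ≤ p) :
    sigmaW p = M.mulVec (sigmaW (par p))
      + psi ((phiLetter (w (par p))).take (p - eta (par p))) := by
  unfold sigmaW
  rw [decomp p hp, psi_append, psi_phi]

lemma piece_mem (c k : ℕ) (hk : k < (phiLetter c).length) :
    (phiLetter c).take k ∈ ({[], [0], [4]} : Set (List ℕ)) := by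
  match c, k with
  | 0, 0 | 0, 1 | 1, 0 | 1, 1 | 3, 0 | 4, 0 | 4, 1 =>
    simp [phiLetter, Set.mem_insert_iff, Set.mem_singleton_iff]
  | 0, (k+2) | 1, (k+2) | 3, (k+1) | 4, (k+2) => simp [phiLetter] at hk
  | 2, k => simp [phiLetter] at hk
  | (n+5), k => simp [phiLetter] at hk

lemma mulVec_sum (s : Finset ℕ) (v : ℕ → Fin 4 → ℤ) :
    M.mulVec (∑ i ∈ s, v i) = ∑ i ∈ s, M.mulVec (v i) := by
  induction s using Finset.induction_on with
  | empty => simp [Matrix.mulVec_zero]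
  | insert _ _ h ih => simp [Finset.sum_insert h, Matrix.mulVec_add, ih]

/-- For every position `p`, there are words `a₀, …, a_{N−1}`, each in
`{ε, [0], [4]}`, with `σ(p) = ∑_{i<N} M^i · ψ(aᵢ)`. -/
theorem sigma_as_sum_of_prefix_vectors (p : ℕ) :
    ∃ (N : ℕ) (a : ℕ → List ℕ),
      (∀ i < N, a i ∈ ({[], [0], [4]} : Set (List ℕ))) ∧
      sigmaW p = ∑ i ∈ Finset.range N, (M ^ i).mulVec (psi (a i)) := by
  induction p using Nat.strong_induction_on with
  | _ p ih =>
    rcases Nat.eq_zero_or_pos p with rfl | hp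
    · refine ⟨0, fun _ => [], by simp, ?_⟩
      simp [sigmaW, psi_nil]
    · obtain ⟨N, a, ha, hsum⟩ := ih (par p) (par_lt_self hp)
      set piece := (phiLetter (w (par p))).take (p - eta (par p)) with hpiece
      refine ⟨N + 1, fun i => match i with | 0 => piece | (i+1) => a i, ?_, ?_⟩
      · intro i hi
        match i with
        | 0 =>
          apply piece_mem
          have h2 := par_lt p
          rw [eta_succ] at h2
          have h1 := par_le p
          omega
        | (i+1) => exact ha i (by omega)
      · rw [sigma_step p hp, hsum, Finset.sum_range_succ']
        congr 1
        · rw [mulVec_sum]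
          apply Finset.sum_congr rfl
          intro k hk
          show M.mulVec ((M^k).mulVec (psi (a k))) = (M^(k+1)).mulVec (psi (a k))
          rw [Matrix.mulVec_mulVec, ← pow_succ']
        · simp [pow_zero, Matrix.one_mulVec, hpiece]
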